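/- For all natural numbers n ≥ 1, ∑_{k=0}^{n} C(2n, 2k) · Γ(n+2k) · Γ(3n-2k) = (Γ(n)²/2) · (Γ(4n)/Γ(2n) + 2·Γ(2n)²/Γ(n)²). -/

import Mathlib

open Finset Real

open PowerSeries
open scoped Nat

lemma even_extract (c : ℕ → ℤ) (h : ∀ j, ¬ Even j → c j = 0) (n : ℕ) :
    ∑ j ∈ Finset.range (2 * n + 1), c j = ∑ k ∈ Finset.range (n + 1), c (2 * k) := by
  induction n with
  | zero => simp
  | succ m ih =>
      have e1 : 2 * (m + 1) + 1 = (2 * m + 1) + 1 + 1 := by ring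
      rw [e1, Finset.sum_range_succ, Finset.sum_range_succ, ih,
        h (2 * m + 1) (by simp [Nat.even_add_one, parity_simps]),
        Finset.sum_range_succ, Finset.sum_range_succ]
      have : 2 * m + 1 + 1 = 2 * (m + 1) := by ring
      rw [this, Finset.sum_range_succ]
      ring

noncomputable def ev (f : PowerSeries ℤ) : PowerSeries ℤ :=
  PowerSeries.mk fun n => if Even n then PowerSeries.coeff (R := ℤ) (n / 2) f else 0

lemma ev_coeff (f : PowerSeries ℤ) (n : ℕ) :
    PowerSeries.coeff (R := ℤ) n (ev f) = if Even n then PowerSeries.coeff (R := ℤ) (n / 2) f else 0 := by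
  simp [ev]

lemma ev_one : ev 1 = 1 := by
  ext n
  rw [ev_coeff]
  split
  · next he =>
      rw [PowerSeries.coeff_one, PowerSeries.coeff_one]
      rcases he with ⟨t, ht⟩
      by_cases h0 : n = 0
      · simp [h0]
      · rw [if_neg (by omega), if_neg h0]
  · next he =>
      rw [PowerSeries.coeff_one, if_neg (by rintro rfl; exact he ⟨0, rfl⟩)]

lemma ev_mul (f g : PowerSeries ℤ) : ev (f * g) = ev f * ev g := by
  ext n
  rw [eq_comm, PowerSeries.coeff_mul, Finset.Nat.sum_antidiagonal_eq_sum_range_succ_mk,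
    ev_coeff]
  rcases Nat.even_or_odd n with ⟨m, hm⟩ | hodd
  · have hm2 : n = 2 * m := by omega
    rw [if_pos ⟨m, hm⟩, show n / 2 = m by omega, PowerSeries.coeff_mul,
      Finset.Nat.sum_antidiagonal_eq_sum_range_succ_mk]
    subst hm2
    rw [show (2 * m).succ = 2 * m + 1 from rfl, even_extract _ ?_ m]
    · apply Finset.sum_congr rfl
      intro k hk
      rw [Finset.mem_range] at hk
      rw [ev_coeff, ev_coeff, if_pos ⟨k, by ring⟩, if_pos ⟨m - k, by omega⟩,
        show 2 * k / 2 = k by omega, show (2 * m - 2 * k) / 2 = m - k by omega]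
    · intro j hj
      rw [ev_coeff, if_neg hj, zero_mul]
  · rw [if_neg (by rcases hodd with ⟨t, ht⟩; rintro ⟨u, hu⟩; omega)]
    apply Finset.sum_eq_zero
    intro j hj
    rw [ev_coeff, ev_coeff]
    rw [Finset.mem_range] at hj
    rcases Nat.even_or_odd j with hj1 | hj1
    · rw [if_pos hj1, if_neg ?_, mul_zero]
      rcases hodd with ⟨t, ht⟩; rcases hj1 with ⟨s, hs⟩
      rintro ⟨u, hu⟩
      simp only at hu
      omega
    · rw [if_neg (by rcases hj1 with ⟨s, hs⟩; rintro ⟨u, hu⟩; omega), zero_mul]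

lemma ev_pow (f : PowerSeries ℤ) (k : ℕ) : ev (f ^ k) = (ev f) ^ k := by
  induction k with
  | zero => simpa using ev_one
  | succ m ih => rw [pow_succ, pow_succ, ev_mul, ih]

lemma ev_one_sub_X : ev (1 - X) = 1 - X ^ 2 := by
  ext n
  rw [ev_coeff]
  rcases n with _ | _ | _ | n
  · simp
  · simp [Nat.not_even_iff_odd, PowerSeries.coeff_one, PowerSeries.coeff_X_pow]
  · simp [PowerSeries.coeff_one, PowerSeries.coeff_X_pow, PowerSeries.coeff_X]
  · split
    · rename_i he
      obtain ⟨t, ht⟩ := he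
      rw [map_sub, map_sub, PowerSeries.coeff_one, PowerSeries.coeff_one,
        PowerSeries.coeff_X, PowerSeries.coeff_X_pow]
      split_ifs <;> first | omega | exact (False.elim (by assumption))
    · rename_i he
      rw [Nat.not_even_iff_odd] at he
      obtain ⟨t, ht⟩ := he
      rw [map_sub, PowerSeries.coeff_one, PowerSeries.coeff_X_pow, eq_comm]
      split_ifs <;> first | omega | exact (False.elim (by assumption))

lemma inv_unique' {a b c : PowerSeries ℤ} (ha : a * c = 1) (hb : b * c = 1) : a = b := by
  calc a = a * (b * c) := by rw [hb, mul_one]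
    _ = b * (a * c) := by ring
    _ = b := by rw [ha, mul_one]

lemma key1 (d m : ℕ) :
    ∑ j ∈ Finset.range (m + 1), ((d + j).choose d : ℤ) * ((d + (m - j)).choose d)
      = ((2 * d + 1 + m).choose (2 * d + 1) : ℤ) := by
  set F : PowerSeries ℤ := PowerSeries.mk fun n => ((d + n).choose d : ℤ) with hFdef
  have hF : F * (1 - X) ^ (d + 1) = 1 :=
    PowerSeries.mk_add_choose_mul_one_sub_pow_eq_one ℤ d
  set G : PowerSeries ℤ := PowerSeries.mk fun n => ((2 * d + 1 + n).choose (2 * d + 1) : ℤ)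
  have hG : G * (1 - X) ^ (2 * d + 1 + 1) = 1 :=
    PowerSeries.mk_add_choose_mul_one_sub_pow_eq_one ℤ (2 * d + 1)
  have hFF : (F * F) * (1 - X) ^ (2 * d + 1 + 1) = 1 := by
    have : (1 - X : PowerSeries ℤ) ^ (2 * d + 1 + 1) = (1 - X) ^ (d + 1) * (1 - X) ^ (d + 1) := by
      rw [← pow_add]; ring_nf
    rw [this, show F * F * ((1-X)^(d+1) * (1-X)^(d+1)) = (F * (1-X)^(d+1)) * (F * (1-X)^(d+1)) by ring,
      hF, mul_one]
  have hEq : F * F = G := inv_unique' hFF hG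
  have hc := congrArg (PowerSeries.coeff (R := ℤ) m) hEq
  rw [PowerSeries.coeff_mul, Finset.Nat.sum_antidiagonal_eq_sum_range_succ_mk,
    PowerSeries.coeff_mk] at hc
  rw [← hc]
  apply Finset.sum_congr rfl
  intro k hk
  simp [hFdef, PowerSeries.coeff_mk]

lemma key2 (d r : ℕ) :
    ∑ j ∈ Finset.range (2 * r + 1),
        ((d + j).choose d : ℤ) * ((-1 : ℤ) ^ (2 * r - j) * ((d + (2 * r - j)).choose d))
      = ((d + r).choose d : ℤ) := by
  set F : PowerSeries ℤ := PowerSeries.mk fun n => ((d + n).choose d : ℤ) with hFdef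
  have hF : F * (1 - X) ^ (d + 1) = 1 :=
    PowerSeries.mk_add_choose_mul_one_sub_pow_eq_one ℤ d
  set G : PowerSeries ℤ := PowerSeries.rescale (-1 : ℤ) F with hGdef
  have hG : G * (1 + X) ^ (d + 1) = 1 := by
    have h2 := congrArg (PowerSeries.rescale (-1 : ℤ)) hF
    rw [map_mul, map_pow, map_sub, map_one, PowerSeries.rescale_neg_one_X, sub_neg_eq_add] at h2
    exact h2
  have hFG : (F * G) * (1 - X ^ 2) ^ (d + 1) = 1 := by
    have h1 : (1 - X ^ 2 : PowerSeries ℤ) = (1 - X) * (1 + X) := by ring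
    rw [h1, mul_pow, show F * G * ((1-X)^(d+1) * (1+X)^(d+1))
        = (F * (1-X)^(d+1)) * (G * (1+X)^(d+1)) by ring, hF, hG, mul_one]
  have hEvF : ev F * (1 - X ^ 2) ^ (d + 1) = 1 := by
    rw [← ev_one_sub_X, ← ev_pow, ← ev_mul, hF, ev_one]
  have hEq : F * G = ev F := inv_unique' hFG hEvF
  have hc := congrArg (PowerSeries.coeff (R := ℤ) (2 * r)) hEq
  rw [PowerSeries.coeff_mul, Finset.Nat.sum_antidiagonal_eq_sum_range_succ_mk,
    ev_coeff, if_pos ⟨r, by ring⟩, show 2 * r / 2 = r by omega,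
    PowerSeries.coeff_mk] at hc
  rw [← hc]
  apply Finset.sum_congr rfl
  intro j hj
  simp [hFdef, hGdef, PowerSeries.coeff_rescale, PowerSeries.coeff_mk]

lemma choose_fac (a b : ℕ) : ((a + b).choose a : ℤ) * (a ! : ℤ) * (b ! : ℤ) = ((a + b)! : ℤ) := by
  have h := Nat.choose_mul_factorial_mul_factorial (Nat.le_add_right a b)
  rw [Nat.add_sub_cancel_left] at h
  exact_mod_cast h

lemma term_id (d j : ℕ) (hj : j ≤ 2 * d + 2) :
    ((2 * d + 2).choose j : ℤ) * ((d + j)! : ℤ) * (((d + (2 * d + 2 - j))! : ℤ))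
      = ((2 * d + 2)! : ℤ) * (d ! : ℤ) * (d ! : ℤ) * ((d + j).choose d : ℤ)
          * ((d + (2 * d + 2 - j)).choose d : ℤ) := by
  have h1 := choose_fac d j
  have h2 := choose_fac d (2 * d + 2 - j)
  have h3 : ((2 * d + 2).choose j : ℤ) * (j ! : ℤ) * ((2 * d + 2 - j)! : ℤ)
      = ((2 * d + 2)! : ℤ) := by
    exact_mod_cast Nat.choose_mul_factorial_mul_factorial hj
  have hpos : ((j ! : ℤ) * ((2 * d + 2 - j)! : ℤ)) ≠ 0 := by positivity
  apply mul_right_cancel₀ hpos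
  have h12 : (((d + j).choose d : ℤ) * (d ! : ℤ) * (j ! : ℤ))
      * (((d + (2 * d + 2 - j)).choose d : ℤ) * (d ! : ℤ) * ((2 * d + 2 - j)! : ℤ))
      = ((d + j)! : ℤ) * (((d + (2 * d + 2 - j))! : ℤ)) := by rw [h1, h2]
  linear_combination (((d + j)! : ℤ) * (((d + (2 * d + 2 - j))! : ℤ))) * h3
    - ((2 * d + 2)! : ℤ) * h12

lemma main_int (d : ℕ) :
    2 * ∑ k ∈ Finset.range (d + 2),
        ((2 * d + 2).choose (2 * k) : ℤ) * ((d + 2 * k)! : ℤ) * ((d + (2 * d + 2 - 2 * k))! : ℤ)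
      = ((2 * d + 2)! : ℤ) * (d ! : ℤ) * (d ! : ℤ)
          * (((4 * d + 3).choose (2 * d + 1) : ℤ) + ((2 * d + 1).choose d : ℤ)) := by
  set c : ℕ → ℤ := fun j =>
    if j ≤ 2 * d + 2 then
      ((2 * d + 2).choose j : ℤ) * ((d + j)! : ℤ) * ((d + (2 * d + 2 - j))! : ℤ)
        * (1 + (-1) ^ (2 * d + 2 - j))
    else 0 with hc
  have hvan : ∀ j, ¬ Even j → c j = 0 := by
    intro j hj
    rw [hc]
    simp only
    split
    · next h =>
        have hodd : (-1 : ℤ) ^ (2 * d + 2 - j) = -1 := by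
          rcases Nat.not_even_iff_odd.mp hj with ⟨t, ht⟩
          exact Odd.neg_one_pow ⟨d - t, by omega⟩
        rw [hodd]
        ring
    · rfl
  have hsum := even_extract c hvan (d + 1)
  have h1 : ∑ j ∈ Finset.range (2 * (d + 1) + 1), c j
      = (∑ j ∈ Finset.range (2 * d + 2 + 1),
          ((2 * d + 2).choose j : ℤ) * ((d + j)! : ℤ) * ((d + (2 * d + 2 - j))! : ℤ))
        + ∑ j ∈ Finset.range (2 * d + 2 + 1),
          ((2 * d + 2).choose j : ℤ) * ((d + j)! : ℤ) * ((d + (2 * d + 2 - j))! : ℤ)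
            * (-1) ^ (2 * d + 2 - j) := by
    rw [← Finset.sum_add_distrib, show 2 * (d + 1) + 1 = 2 * d + 2 + 1 by ring]
    apply Finset.sum_congr rfl
    intro j hj
    rw [Finset.mem_range] at hj
    rw [hc]
    simp only
    rw [if_pos (by omega)]
    ring
  have h2 : ∑ k ∈ Finset.range (d + 1 + 1), c (2 * k)
      = 2 * ∑ k ∈ Finset.range (d + 2),
          ((2 * d + 2).choose (2 * k) : ℤ) * ((d + 2 * k)! : ℤ)
            * ((d + (2 * d + 2 - 2 * k))! : ℤ) := by
    rw [Finset.mul_sum, show d + 1 + 1 = d + 2 by ring]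
    apply Finset.sum_congr rfl
    intro k hk
    rw [Finset.mem_range] at hk
    rw [hc]
    simp only
    rw [if_pos (by omega),
      (Even.neg_one_pow ⟨d + 1 - k, by omega⟩ : (-1 : ℤ) ^ (2 * d + 2 - 2 * k) = 1)]
    ring
  have k1 := key1 d (2 * d + 2)
  rw [show 2 * d + 1 + (2 * d + 2) = 4 * d + 3 by ring] at k1
  have hfull : (∑ j ∈ Finset.range (2 * d + 2 + 1),
      ((2 * d + 2).choose j : ℤ) * ((d + j)! : ℤ) * ((d + (2 * d + 2 - j))! : ℤ))
      = ((2 * d + 2)! : ℤ) * (d ! : ℤ) * (d ! : ℤ) * ((4 * d + 3).choose (2 * d + 1) : ℤ) := by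
    rw [show (((2 * d + 2)! : ℤ) * (d ! : ℤ) * (d ! : ℤ) * ((4 * d + 3).choose (2 * d + 1) : ℤ))
      = ((2 * d + 2)! : ℤ) * (d ! : ℤ) * (d ! : ℤ)
        * ∑ j ∈ Finset.range (2 * d + 2 + 1),
            ((d + j).choose d : ℤ) * ((d + (2 * d + 2 - j)).choose d : ℤ) by rw [k1],
      Finset.mul_sum]
    apply Finset.sum_congr rfl
    intro j hj
    rw [Finset.mem_range] at hj
    rw [term_id d j (by omega)]
    ring
  have k2 := key2 d (d + 1)
  rw [show 2 * (d + 1) = 2 * d + 2 by ring, show d + (d + 1) = 2 * d + 1 by ring] at k2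
  have halt : (∑ j ∈ Finset.range (2 * d + 2 + 1),
      ((2 * d + 2).choose j : ℤ) * ((d + j)! : ℤ) * ((d + (2 * d + 2 - j))! : ℤ)
        * (-1) ^ (2 * d + 2 - j))
      = ((2 * d + 2)! : ℤ) * (d ! : ℤ) * (d ! : ℤ) * ((2 * d + 1).choose d : ℤ) := by
    rw [show (((2 * d + 2)! : ℤ) * (d ! : ℤ) * (d ! : ℤ) * ((2 * d + 1).choose d : ℤ))
      = ((2 * d + 2)! : ℤ) * (d ! : ℤ) * (d ! : ℤ)
        * ∑ j ∈ Finset.range (2 * d + 2 + 1),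
            ((d + j).choose d : ℤ)
              * ((-1 : ℤ) ^ (2 * d + 2 - j) * ((d + (2 * d + 2 - j)).choose d : ℤ)) by rw [k2],
      Finset.mul_sum]
    apply Finset.sum_congr rfl
    intro j hj
    rw [Finset.mem_range] at hj
    rw [show ((2 * d + 2).choose j : ℤ) * ((d + j)! : ℤ) * ((d + (2 * d + 2 - j))! : ℤ)
        * (-1) ^ (2 * d + 2 - j)
      = (((2 * d + 2).choose j : ℤ) * ((d + j)! : ℤ) * ((d + (2 * d + 2 - j))! : ℤ))
        * (-1) ^ (2 * d + 2 - j) by ring, term_id d j (by omega)]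
    ring
  rw [← h2, ← hsum, h1, hfull, halt]
  ring

theorem stmt6 (n : ℕ) (hn : 1 ≤ n) :
    ∑ k ∈ Finset.range (n + 1),
        (Nat.choose (2 * n) (2 * k) : ℝ) * Real.Gamma (n + 2 * k)
          * Real.Gamma (3 * (n : ℝ) - 2 * k)
      = Real.Gamma n ^ 2 / 2 * (Real.Gamma (4 * n) / Real.Gamma (2 * n)
          + 2 * Real.Gamma (2 * n) ^ 2 / Real.Gamma n ^ 2) := by
  obtain ⟨d, rfl⟩ : ∃ d, n = d + 1 := ⟨n - 1, by omega⟩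
  have hterm : ∀ k ∈ Finset.range (d + 1 + 1),
      (Nat.choose (2 * (d + 1)) (2 * k) : ℝ) * Real.Gamma ((d + 1 : ℕ) + 2 * k)
          * Real.Gamma (3 * ((d + 1 : ℕ) : ℝ) - 2 * k)
        = ((2 * d + 2).choose (2 * k) : ℝ) * ((d + 2 * k)! : ℝ)
            * ((d + (2 * d + 2 - 2 * k))! : ℝ) := by
    intro k hk
    rw [Finset.mem_range] at hk
    have h2k : 2 * k ≤ 2 * d + 2 := by omega
    have e1 : ((d + 1 : ℕ) : ℝ) + 2 * (k : ℝ) = ((d + 2 * k : ℕ) : ℝ) + 1 := by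
      push_cast; ring
    have e2 : 3 * ((d + 1 : ℕ) : ℝ) - 2 * (k : ℝ) = ((d + (2 * d + 2 - 2 * k) : ℕ) : ℝ) + 1 := by
      push_cast [Nat.cast_sub h2k]
      ring
    rw [e1, e2, Real.Gamma_nat_eq_factorial, Real.Gamma_nat_eq_factorial,
      show 2 * (d + 1) = 2 * d + 2 by ring]
  rw [Finset.sum_congr rfl hterm]
  have hgd : Real.Gamma ((d + 1 : ℕ) : ℝ) = (d ! : ℝ) := by
    rw [show ((d + 1 : ℕ) : ℝ) = (d : ℕ) + 1 by push_cast; ring, Real.Gamma_nat_eq_factorial]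
  have hg2 : Real.Gamma (2 * ((d + 1 : ℕ) : ℝ)) = ((2 * d + 1)! : ℝ) := by
    rw [show 2 * ((d + 1 : ℕ) : ℝ) = ((2 * d + 1 : ℕ) : ℝ) + 1 by push_cast; ring,
      Real.Gamma_nat_eq_factorial]
  have hg4 : Real.Gamma (4 * ((d + 1 : ℕ) : ℝ)) = ((4 * d + 3)! : ℝ) := by
    rw [show 4 * ((d + 1 : ℕ) : ℝ) = ((4 * d + 3 : ℕ) : ℝ) + 1 by push_cast; ring,
      Real.Gamma_nat_eq_factorial]
  rw [hgd, hg2, hg4]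
  have hR : 2 * (∑ k ∈ Finset.range (d + 1 + 1),
      ((2 * d + 2).choose (2 * k) : ℝ) * ((d + 2 * k)! : ℝ) * ((d + (2 * d + 2 - 2 * k))! : ℝ))
      = ((2 * d + 2)! : ℝ) * (d ! : ℝ) * (d ! : ℝ)
          * (((4 * d + 3).choose (2 * d + 1) : ℝ) + ((2 * d + 1).choose d : ℝ)) := by
    exact_mod_cast main_int d
  have hc1 : ((4 * d + 3).choose (2 * d + 1) : ℝ) * ((2 * d + 1)! : ℝ) * ((2 * d + 2)! : ℝ)
      = ((4 * d + 3)! : ℝ) := by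
    have h := Nat.choose_mul_factorial_mul_factorial (show 2 * d + 1 ≤ 4 * d + 3 by omega)
    rw [show 4 * d + 3 - (2 * d + 1) = 2 * d + 2 by omega] at h
    exact_mod_cast h
  have hc2 : ((2 * d + 1).choose d : ℝ) * (d ! : ℝ) * ((d + 1)! : ℝ) = ((2 * d + 1)! : ℝ) := by
    have h := Nat.choose_mul_factorial_mul_factorial (show d ≤ 2 * d + 1 by omega)
    rw [show 2 * d + 1 - d = d + 1 by omega] at h
    exact_mod_cast h
  have hfac : ((2 * d + 2)! : ℝ) = (2 * (d : ℝ) + 2) * ((2 * d + 1)! : ℝ) := by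
    rw [show 2 * d + 2 = (2 * d + 1) + 1 by ring, Nat.factorial_succ]
    push_cast; ring
  have hfacd : ((d + 1)! : ℝ) = ((d : ℝ) + 1) * (d ! : ℝ) := by
    rw [Nat.factorial_succ]; push_cast; ring
  have hB : ((2 * d + 1)! : ℝ) ≠ 0 := by positivity
  have hD : (d ! : ℝ) ≠ 0 := by positivity
  have hgoal : (∑ k ∈ Finset.range (d + 1 + 1),
      ((2 * d + 2).choose (2 * k) : ℝ) * ((d + 2 * k)! : ℝ) * ((d + (2 * d + 2 - 2 * k))! : ℝ))
      = ((d ! : ℝ) ^ 2 * ((4 * d + 3)! : ℝ) + 2 * ((2 * d + 1)! : ℝ) ^ 3)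
        / (2 * ((2 * d + 1)! : ℝ)) := by
    rw [eq_div_iff (by positivity)]
    linear_combination ((2 * d + 1)! : ℝ) * hR + (d ! : ℝ) ^ 2 * hc1
      + ((2 * d + 1)! : ℝ) * (d ! : ℝ) ^ 2 * (((2 * d + 1).choose d : ℝ)) * hfac
      + 2 * ((2 * d + 1)! : ℝ) ^ 2 * hc2
      - 2 * ((2 * d + 1)! : ℝ) ^ 2 * (((2 * d + 1).choose d : ℝ)) * (d ! : ℝ) * hfacd
  rw [hgoal]
  field_simp
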